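/- Let G be a finite non-abelian DC p-group with nilpotency class c. Then for every i with 2 ≤ i ≤ c, the quotient K_i(G)/K_{i+1}(G) of consecutive terms of the lower central series is cyclic. -/

import Mathlib

/-- A group is a `DC`-group if the set of derived subgroups of its subgroups
is a chain under inclusion. -/
def IsDCGroup (G : Type*) [Group G] : Prop :=
  ∀ H K : Subgroup G, ⁅H, H⁆ ≤ ⁅K, K⁆ ∨ ⁅K, K⁆ ≤ ⁅H, H⁆

section Aux

open Subgroup

open scoped commutatorElement

variable {G : Type*} [Group G]

lemma IsDCGroup.of_surjective {G' : Type*} [Group G'] (f : G →* G')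
    (hf : Function.Surjective f) (h : IsDCGroup G) : IsDCGroup G' := by
  intro H K
  have hH : H = (H.comap f).map f := (Subgroup.map_comap_eq_self_of_surjective hf H).symm
  have hK : K = (K.comap f).map f := (Subgroup.map_comap_eq_self_of_surjective hf K).symm
  rw [hH, hK, ← Subgroup.map_commutator, ← Subgroup.map_commutator]
  rcases h (H.comap f) (K.comap f) with h' | h'
  · exact Or.inl (Subgroup.map_mono h')
  · exact Or.inr (Subgroup.map_mono h')

lemma commute_closure_pair {s t : G} (h : Commute s t) {a b : G}
    (ha : a ∈ closure ({s, t} : Set G)) (hb : b ∈ closure ({s, t} : Set G)) :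
    Commute a b := by
  have h1 : closure ({s, t} : Set G) ≤ centralizer {s, t} := by
    rw [closure_le]
    rintro u hu
    rw [SetLike.mem_coe, mem_centralizer_iff]
    rintro v hv
    rcases hu with rfl | rfl <;> rcases hv with rfl | rfl
    · rfl
    · exact h.symm
    · exact h
    · rfl
  have h2 : closure ({s, t} : Set G) ≤ centralizer {b} := by
    rw [closure_le]
    intro u hu
    rw [SetLike.mem_coe, mem_centralizer_iff]
    rintro v rfl
    exact (h1 hb u hu).symm
  exact ((h2 ha) b rfl).symm

lemma isCyclic_of_eq_zpowers {K : Subgroup G} {c : G} (h : K = Subgroup.zpowers c) :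
    IsCyclic K := by
  subst h
  refine ⟨⟨c, Subgroup.mem_zpowers c⟩, ?_⟩
  rintro ⟨x, hx⟩
  obtain ⟨n, hn⟩ := hx
  exact ⟨n, by ext; simpa using hn⟩

/-- In a group, a two-generated subgroup whose generators have central commutator has
cyclic derived subgroup, generated by that commutator. -/
lemma two_gen_derived (x g : G) (hc : ⁅x, g⁆ ∈ Subgroup.center G) :
    ⁅closure ({x, g} : Set G), closure ({x, g} : Set G)⁆ = Subgroup.zpowers ⁅x, g⁆ := by
  have hnorm : (Subgroup.zpowers ⁅x, g⁆).Normal := by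
    constructor
    intro n hn y
    rw [Subgroup.mem_zpowers_iff] at hn ⊢
    obtain ⟨k, rfl⟩ := hn
    have hcomy : Commute y ⁅x, g⁆ := Subgroup.mem_center_iff.mp hc y
    exact ⟨k, by rw [(hcomy.zpow_right k).eq, mul_inv_cancel_right]⟩
  apply le_antisymm
  · set Z := Subgroup.zpowers ⁅x, g⁆ with hZ
    rw [Subgroup.commutator_le]
    intro a ha b hb
    set π := QuotientGroup.mk' Z with hπ
    have hker : π.ker = Z := QuotientGroup.ker_mk' Z
    have hcomm : Commute (π x) (π g) := by
      rw [← commutatorElement_eq_one_iff_commute, ← map_commutatorElement]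
      rw [← MonoidHom.mem_ker, hker]
      exact Subgroup.mem_zpowers _
    have hmapmem : ∀ u : G, u ∈ closure ({x, g} : Set G) →
        π u ∈ closure ({π x, π g} : Set (G ⧸ Z)) := by
      intro u hu
      have : π u ∈ (closure ({x, g} : Set G)).map π := ⟨u, hu, rfl⟩
      rwa [MonoidHom.map_closure, Set.image_pair] at this
    have := commute_closure_pair hcomm (hmapmem a ha) (hmapmem b hb)
    rw [← commutatorElement_eq_one_iff_commute, ← map_commutatorElement,
      ← MonoidHom.mem_ker, hker] at this
    exact this
  · rw [Subgroup.zpowers_le]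
    exact Subgroup.commutator_mem_commutator
      (Subgroup.subset_closure (Set.mem_insert x {g}))
      (Subgroup.subset_closure (Set.mem_insert_of_mem x rfl))

/-- In a finite DC-group, a commutator subgroup `⁅P, ⊤⁆` which is central is cyclic. -/
lemma cyclic_of_central_commutator [Finite G] (hdc : IsDCGroup G) (P : Subgroup G)
    (hZ : ⁅⁅P, (⊤ : Subgroup G)⁆, (⊤ : Subgroup G)⁆ = ⊥) :
    IsCyclic (⁅P, (⊤ : Subgroup G)⁆ : Subgroup G) := by
  have hcen : ∀ p ∈ P, ∀ g : G, ⁅p, g⁆ ∈ Subgroup.center G := by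
    intro p hp g
    have hmem : ⁅p, g⁆ ∈ ⁅P, (⊤ : Subgroup G)⁆ :=
      Subgroup.commutator_mem_commutator hp (Subgroup.mem_top g)
    rw [Subgroup.commutator_eq_bot_iff_le_centralizer] at hZ
    have := hZ hmem
    rwa [Subgroup.coe_top, Subgroup.centralizer_univ] at this
  set T : Set (Subgroup G) := {K | ∃ p ∈ P, ∃ g : G, K = Subgroup.zpowers ⁅p, g⁆} with hT
  have hTfin : T.Finite := Set.toFinite T
  have hTne : T.Nonempty := ⟨Subgroup.zpowers ⁅(1 : G), (1 : G)⁆, 1, P.one_mem, 1, rfl⟩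
  have hchain : ∀ K₁ ∈ T, ∀ K₂ ∈ T, K₁ ≤ K₂ ∨ K₂ ≤ K₁ := by
    rintro K₁ ⟨p₁, hp₁, g₁, rfl⟩ K₂ ⟨p₂, hp₂, g₂, rfl⟩
    rw [← two_gen_derived p₁ g₁ (hcen p₁ hp₁ g₁), ← two_gen_derived p₂ g₂ (hcen p₂ hp₂ g₂)]
    exact hdc _ _
  obtain ⟨m, hmT, hmax⟩ := Set.Finite.exists_maximalFor id T hTfin hTne
  have hub : ∀ K ∈ T, K ≤ m := by
    intro K hK
    rcases hchain K hK m hmT with h | h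
    · exact h
    · exact hmax hK h
  have heq : ⁅P, (⊤ : Subgroup G)⁆ = m := by
    apply le_antisymm
    · rw [Subgroup.commutator_le]
      intro p hp g _
      exact hub (Subgroup.zpowers ⁅p, g⁆) ⟨p, hp, g, rfl⟩ (Subgroup.mem_zpowers _)
    · obtain ⟨p, hp, g, rfl⟩ := hmT
      rw [Subgroup.zpowers_le]
      exact Subgroup.commutator_mem_commutator hp (Subgroup.mem_top g)
  obtain ⟨p, hp, g, hm⟩ := hmT
  exact isCyclic_of_eq_zpowers (heq.trans hm)

end Aux

theorem dc_lcs_quotient_cyclic (p : ℕ) [Fact p.Prime] (G : Type*) [Group G] [Finite G]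
    [Group.IsNilpotent G] (hG : IsPGroup p G) (hdc : IsDCGroup G)
    (hna : ¬ ∀ a b : G, a * b = b * a) :
    ∀ i : ℕ, 2 ≤ i → i ≤ Group.nilpotencyClass G →
      IsCyclic (↥((⊤ : Subgroup G).lowerCentralSeries (i - 1)) ⧸
        ((⊤ : Subgroup G).lowerCentralSeries i).subgroupOf ((⊤ : Subgroup G).lowerCentralSeries (i - 1))) := by
  intro i hi _
  set N := (⊤ : Subgroup G).lowerCentralSeries i with hN
  set L := (⊤ : Subgroup G).lowerCentralSeries (i - 1) with hL
  haveI : N.Normal := Subgroup.lowerCentralSeries_normal ⊤ i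
  set f := QuotientGroup.mk' N with hf
  have hfsurj : Function.Surjective f := QuotientGroup.mk'_surjective N
  have hdc' : IsDCGroup (G ⧸ N) := IsDCGroup.of_surjective f hfsurj hdc
  -- L.map f = ⁅P, ⊤⁆ where P is the image of the previous term
  set P := ((⊤ : Subgroup G).lowerCentralSeries (i - 2)).map f with hP
  have hi1 : i - 1 = (i - 2) + 1 := by omega
  have hi2 : i = (i - 1) + 1 := by omega
  have hsucc : ∀ n : ℕ, (⊤ : Subgroup G).lowerCentralSeries (n + 1) = ⁅(⊤ : Subgroup G).lowerCentralSeries n, (⊤ : Subgroup G)⁆ :=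
    fun n => rfl
  have hclaim1 : L.map f = ⁅P, (⊤ : Subgroup (G ⧸ N))⁆ := by
    rw [hL, hi1, hsucc, Subgroup.map_commutator, ← hP, Subgroup.map_top_of_surjective f hfsurj]
  have hclaim2 : ⁅⁅P, (⊤ : Subgroup (G ⧸ N))⁆, (⊤ : Subgroup (G ⧸ N))⁆ = ⊥ := by
    rw [← hclaim1, ← Subgroup.map_top_of_surjective f hfsurj, ← Subgroup.map_commutator]
    rw [Subgroup.map_eq_bot_iff]
    have : ⁅L, (⊤ : Subgroup G)⁆ = N := by
      rw [hN, hi2, hsucc, ← hL]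
    rw [this, hf, QuotientGroup.ker_mk']
  have hmapcyc : IsCyclic (L.map f) := by
    rw [hclaim1]
    exact cyclic_of_central_commutator hdc' P hclaim2
  -- transfer along the isomorphism L ⧸ N.subgroupOf L ≃* L.map f
  set φ := f.domRestrict L with hφ
  have hker : φ.ker = N.subgroupOf L := by
    rw [hφ, MonoidHom.ker_domRestrict, hf, QuotientGroup.ker_mk']
  have hrange : φ.range = L.map f := by
    rw [hφ, MonoidHom.domRestrict_range]
  haveI : IsCyclic φ.range := by rw [hrange]; exact hmapcyc
  have e1 : ↥L ⧸ φ.ker ≃* φ.range := QuotientGroup.quotientKerEquivRange φ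
  haveI hcyc : IsCyclic (↥L ⧸ φ.ker) := isCyclic_of_surjective e1.symm e1.symm.surjective
  haveI : (N.subgroupOf L).Normal := hker ▸ φ.normal_ker
  have e0 : (↥L ⧸ φ.ker) ≃* (↥L ⧸ N.subgroupOf L) := QuotientGroup.quotientMulEquivOfEq hker
  exact isCyclic_of_surjective e0 e0.surjective
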